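/- Let N ≥ 1, let a_1, a_2, a_3 ∈ ℝ^N, and let ε > 0 satisfy ‖a_2 − a_3‖ > 12ε. Suppose φ : Σ_3 → ℝ^N is an observable such that ‖φ(η) − a_{η_0}‖ ≤ ε for every η ∈ Σ_3 (where η_0 is the 0-th symbol of η). Then there exists ξ ∈ Σ_3 whose rotation vector is not defined, i.e. the limit lim_{n→∞} (1/n) Σ_{i=0}^{n−1} φ(σ^i ξ) does not exist. -/

import Mathlib

open Filter Topology

/-- The symbol space `Σ_s`: bi-infinite admissible sequences over an alphabet with
`s` symbols (represented by `Fin s`), i.e. `ξ_i ≠ ξ_{i+1}` for all `i ∈ ℤ`. -/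
def SymbSpace (s : ℕ) : Type := {ξ : ℤ → Fin s // ∀ i : ℤ, ξ i ≠ ξ (i + 1)}

/-- The (left) shift map `σ : Σ_s → Σ_s`, `(σξ)_i = ξ_{i+1}`. -/
def shift {s : ℕ} (ξ : SymbSpace s) : SymbSpace s :=
  ⟨fun i => ξ.1 (i + 1), fun i => ξ.2 (i + 1)⟩

/-- Birkhoff average `A_n(ξ) = (1/n) ∑_{i=0}^{n-1} φ(σ^i ξ)`. -/
noncomputable def birk {s N : ℕ} (φ : SymbSpace s → EuclideanSpace ℝ (Fin N))
    (n : ℕ) (ξ : SymbSpace s) : EuclideanSpace ℝ (Fin N) :=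
  (n : ℝ)⁻¹ • ∑ i ∈ Finset.range n, φ (shift^[i] ξ)

/-- `ρ` is the rotation vector `ρ_φ(ξ)`, i.e. the limit of the Birkhoff averages exists
and equals `ρ`. -/
def HasRotVec {s N : ℕ} (φ : SymbSpace s → EuclideanSpace ℝ (Fin N))
    (ξ : SymbSpace s) (ρ : EuclideanSpace ℝ (Fin N)) : Prop :=
  Tendsto (fun n => birk φ n ξ) atTop (nhds ρ)


/- Auxiliary construction -/

def Kf (i : ℕ) : ℕ := ((Finset.range (i+1)).filter (fun k => Nat.factorial k ≤ i)).card
def cfun (i : ℕ) : Fin 3 := if Kf i % 2 = 0 then 1 else 2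
lemma cfun_ne_zero (i : ℕ) : cfun i ≠ 0 := by unfold cfun; split <;> decide

lemma Kf_eq (m i : ℕ) (h1 : Nat.factorial m ≤ i) (h2 : i < Nat.factorial (m+1)) :
    Kf i = m + 1 := by
  have hfilter : ((Finset.range (i+1)).filter (fun k => Nat.factorial k ≤ i))
      = Finset.range (m+1) := by
    ext k
    simp only [Finset.mem_filter, Finset.mem_range]
    constructor
    · rintro ⟨-, hk⟩
      by_contra hc
      push_neg at hc
      exact absurd (le_trans (Nat.factorial_le hc) hk) (not_le.mpr h2)
    · intro hk
      have hk' : Nat.factorial k ≤ i :=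
        le_trans (Nat.factorial_le (Nat.lt_succ_iff.mp hk)) h1
      exact ⟨lt_of_le_of_lt (le_trans (Nat.self_le_factorial k) hk') (Nat.lt_succ_self i), hk'⟩
  rw [Kf, hfilter, Finset.card_range]

lemma cfun_block (m i : ℕ) (h1 : Nat.factorial m ≤ i) (h2 : i < Nat.factorial (m+1)) :
    cfun i = if (m+1) % 2 = 0 then 1 else 2 := by
  rw [cfun, Kf_eq m i h1 h2]

def xifun : ℤ → Fin 3 := fun i =>
  if i % 2 = 0 then 0 else if 0 ≤ i then cfun i.toNat else 1

lemma xifun_adm (i : ℤ) : xifun i ≠ xifun (i+1) := by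
  unfold xifun
  have h : i % 2 = 0 ∨ (i+1) % 2 = 0 := by omega
  have h2 : ¬ (i % 2 = 0 ∧ (i+1) % 2 = 0) := by omega
  rcases h with h | h
  · simp only [if_pos h, if_neg (by omega : ¬ (i+1) % 2 = 0)]
    split
    · exact (cfun_ne_zero _).symm
    · decide
  · simp only [if_pos h, if_neg (by omega : ¬ i % 2 = 0)]
    split
    · exact cfun_ne_zero _
    · decide

def xi : SymbSpace 3 := ⟨xifun, xifun_adm⟩

def g (i : ℕ) : Fin 3 := if i % 2 = 0 then 0 else cfun i

lemma xifun_nat (i : ℕ) : xifun (i : ℤ) = g i := by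
  unfold xifun g
  have : ((i:ℤ) % 2 = 0) ↔ i % 2 = 0 := by omega
  by_cases h : i % 2 = 0
  · rw [if_pos (by omega : (i:ℤ) % 2 = 0), if_pos h]
  · rw [if_neg (by omega : ¬(i:ℤ) % 2 = 0), if_neg h,
      if_pos (by positivity), Int.toNat_natCast]

lemma shift_iter {s : ℕ} (ξ : SymbSpace s) (i : ℕ) (j : ℤ) :
    (shift^[i] ξ).1 j = ξ.1 (j + i) := by
  induction i generalizing j with
  | zero => simp
  | succ n ih =>
    rw [Function.iterate_succ_apply']
    show (shift^[n] ξ).1 (j + 1) = ξ.1 (j + (n+1))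
    rw [ih]
    ring_nf

variable {N : ℕ}

lemma pair_sum (a : Fin 3 → EuclideanSpace ℝ (Fin N)) (m : ℕ) (hm : m % 2 = 0) (v : Fin 3)
    (p : ℕ) (hv : ∀ j < 2*p, cfun (m + j) = v) :
    ∑ j ∈ Finset.range (2*p), a (g (m + j)) = (p : ℝ) • (a 0 + a v) := by
  induction p with
  | zero => simp
  | succ q ih =>
    have h1 : 2 * (q+1) = (2*q) + 1 + 1 := by ring
    rw [h1, Finset.sum_range_succ, Finset.sum_range_succ,
      ih (fun j hj => hv j (by omega))]
    have e0 : g (m + 2*q) = 0 := by unfold g; rw [if_pos (by omega)]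
    have e1 : g (m + (2*q + 1)) = v := by
      unfold g; rw [if_neg (by omega), hv _ (by omega)]
    rw [e0, e1]
    push_cast
    rw [add_smul, one_smul]
    abel




lemma avg_est (a : Fin 3 → EuclideanSpace ℝ (Fin N)) (ε : ℝ)
    (φ : SymbSpace 3 → EuclideanSpace ℝ (Fin N))
    (hφ : ∀ η : SymbSpace 3, ‖φ η - a (η.1 0)‖ ≤ ε)
    (M : ℝ) (hM : ∀ j, ‖a j‖ ≤ M) (k : ℕ) (hk : 2 ≤ k) :
    ‖birk φ (Nat.factorial (k+1)) xi -
      (2:ℝ)⁻¹ • (a 0 + a (if (k+1) % 2 = 0 then 1 else 2))‖ ≤ ε + 2*M/(k+1) := by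
  have hM0 : 0 ≤ M := le_trans (norm_nonneg _) (hM 0)
  set v : Fin 3 := if (k+1) % 2 = 0 then 1 else 2 with hv_def
  set m := Nat.factorial k with hm_def
  set n := Nat.factorial (k+1) with hn_def
  have hmpos : 0 < m := Nat.factorial_pos k
  have hn : n = (k+1) * m := by rw [hn_def, hm_def, Nat.factorial_succ]
  have hnpos : 0 < n := Nat.factorial_pos (k+1)
  have hm2 : m % 2 = 0 := by
    have : 2 ∣ m := Nat.dvd_factorial (by norm_num) hk
    omega
  have hkm2 : 2 ∣ k * m := Dvd.dvd.mul_left (by omega) k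
  obtain ⟨p, hp⟩ : ∃ p, k * m = 2 * p := hkm2
  have hnm : n = m + 2 * p := by
    have hx : (k+1) * m = k * m + m := by ring
    rw [hn]; omega
  -- value of cfun on the block
  have hv : ∀ j < 2*p, cfun (m + j) = v := by
    intro j hj
    exact cfun_block k (m + j) (Nat.le_add_right m j) (by omega)
  -- sums
  set S1 := ∑ i ∈ Finset.range n, φ (shift^[i] xi) with hS1
  set S2 := ∑ i ∈ Finset.range n, a (g i) with hS2
  set H := ∑ i ∈ Finset.range m, a (g i) with hH
  have hsplit : S2 = H + (p : ℝ) • (a 0 + a v) := by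
    rw [hS2, hnm, Finset.sum_range_add, pair_sum a m hm2 v p hv]
  have hg0 : ∀ i : ℕ, (shift^[i] xi).1 0 = g i := by
    intro i
    rw [shift_iter, zero_add]
    exact xifun_nat i
  have hdiff : ‖S1 - S2‖ ≤ n * ε := by
    rw [hS1, hS2, ← Finset.sum_sub_distrib]
    calc ‖∑ i ∈ Finset.range n, (φ (shift^[i] xi) - a (g i))‖
        ≤ ∑ i ∈ Finset.range n, ‖φ (shift^[i] xi) - a (g i)‖ := norm_sum_le _ _
      _ ≤ ∑ i ∈ Finset.range n, ε := by
          apply Finset.sum_le_sum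
          intro i _
          rw [← hg0 i]
          exact hφ _
      _ = n * ε := by rw [Finset.sum_const, Finset.card_range, nsmul_eq_mul]
  have hHnorm : ‖H‖ ≤ m * M := by
    calc ‖H‖ ≤ ∑ i ∈ Finset.range m, ‖a (g i)‖ := norm_sum_le _ _
      _ ≤ ∑ i ∈ Finset.range m, M := Finset.sum_le_sum (fun i _ => hM _)
      _ = m * M := by rw [Finset.sum_const, Finset.card_range, nsmul_eq_mul]
  have havnorm : ‖a 0 + a v‖ ≤ 2 * M := by
    calc ‖a 0 + a v‖ ≤ ‖a 0‖ + ‖a v‖ := norm_add_le _ _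
      _ ≤ 2 * M := by have := hM 0; have := hM v; linarith
  -- main decomposition
  have hdecomp : birk φ n xi - (2:ℝ)⁻¹ • (a 0 + a v)
      = (n:ℝ)⁻¹ • (S1 - S2) + ((n:ℝ)⁻¹ • H + ((p:ℝ)/n - 2⁻¹) • (a 0 + a v)) := by
    rw [birk, ← hS1, hsplit]
    module
  have hpn : (p : ℝ) / n - 2⁻¹ = - (m / (2 * n)) := by
    have hmn : (n : ℝ) = m + 2 * p := by exact_mod_cast congrArg Nat.cast hnm
    have hn0 : (n : ℝ) ≠ 0 := by positivity
    field_simp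
    linear_combination (-1:ℝ) * hmn
  have hmn_le : (m : ℝ) / n = 1 / (k+1) := by
    have : (n : ℝ) = (k+1) * m := by exact_mod_cast congrArg Nat.cast hn
    rw [this]
    have hm0 : (m:ℝ) ≠ 0 := by positivity
    field_simp
  rw [hdecomp]
  have hn0 : (0:ℝ) < n := by exact_mod_cast hnpos
  calc ‖(n:ℝ)⁻¹ • (S1 - S2) + ((n:ℝ)⁻¹ • H + ((p:ℝ)/n - 2⁻¹) • (a 0 + a v))‖
      ≤ ‖(n:ℝ)⁻¹ • (S1 - S2)‖ + (‖(n:ℝ)⁻¹ • H‖ + ‖((p:ℝ)/n - 2⁻¹) • (a 0 + a v)‖) := by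
        refine le_trans (norm_add_le _ _) ?_
        gcongr
        exact norm_add_le _ _
    _ ≤ (n:ℝ)⁻¹ * (n * ε) + ((n:ℝ)⁻¹ * (m * M) + (m / (2*n)) * (2*M)) := by
        gcongr ?_ + (?_ + ?_)
        · rw [norm_smul, norm_inv, Real.norm_natCast]
          gcongr
        · rw [norm_smul, norm_inv, Real.norm_natCast]
          gcongr
        · rw [norm_smul, hpn, norm_neg, Real.norm_eq_abs, abs_of_nonneg (by positivity)]
          gcongr
    _ = ε + 2 * M * ((m:ℝ)/n) := by field_simp; ring
    _ = ε + 2*M/(k+1) := by rw [hmn_le]; ring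


/- The symbols `1, 2, 3` of the paper are represented by `0, 1, 2 : Fin 3`;
accordingly `a_1, a_2, a_3` are `a 0, a 1, a 2` for `a : Fin 3 → ℝ^N`. -/

/-- if `‖φ(η) - a_{η_0}‖ ≤ ε` for all `η ∈ Σ_3`, where
`‖a_2 - a_3‖ > 12ε`, then some `ξ ∈ Σ_3` has no rotation vector. -/
theorem exists_trajectory_without_rotation_vector (N : ℕ) (hN : 1 ≤ N)
    (a : Fin 3 → EuclideanSpace ℝ (Fin N)) (ε : ℝ) (hε : 0 < ε)
    (ha : ‖a 1 - a 2‖ > 12 * ε)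
    (φ : SymbSpace 3 → EuclideanSpace ℝ (Fin N))
    (hφ : ∀ η : SymbSpace 3, ‖φ η - a (η.1 0)‖ ≤ ε) :
    ∃ ξ : SymbSpace 3, ¬ ∃ ρ : EuclideanSpace ℝ (Fin N), HasRotVec φ ξ ρ := by
  refine ⟨xi, ?_⟩
  rintro ⟨ρ, hρ⟩
  rw [HasRotVec, Metric.tendsto_atTop] at hρ
  obtain ⟨n0, hn0⟩ := hρ ε hε
  set M : ℝ := ‖a 0‖ + ‖a 1‖ + ‖a 2‖ + 1 with hM_def
  have hM : ∀ j : Fin 3, ‖a j‖ ≤ M := by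
    intro j
    have h0 := norm_nonneg (a 0); have h1 := norm_nonneg (a 1)
    have h2 := norm_nonneg (a 2)
    fin_cases j
    · show ‖a 0‖ ≤ M; simp only [hM_def]; linarith
    · show ‖a 1‖ ≤ M; simp only [hM_def]; linarith
    · show ‖a 2‖ ≤ M; simp only [hM_def]; linarith
  have hMpos : 0 < M := by
    have h0 := norm_nonneg (a 0); have h1 := norm_nonneg (a 1)
    have h2 := norm_nonneg (a 2)
    simp only [hM_def]; linarith
  set k : ℕ := 2 * (n0 + 2 + ⌈2*M/ε⌉₊) + 1 with hk_def
  have hk2 : 2 ≤ k := by omega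
  have hkceil : (⌈2*M/ε⌉₊ : ℝ) ≤ (k:ℝ) + 1 := by
    have : ⌈2*M/ε⌉₊ ≤ k + 1 := by omega
    exact_mod_cast this
  have hkM : 2*M/((k:ℝ)+1) ≤ ε := by
    have h1 : 2*M/ε ≤ (k:ℝ)+1 := le_trans (Nat.le_ceil _) hkceil
    have hk1 : (0:ℝ) < (k:ℝ)+1 := by positivity
    rw [div_le_iff₀ hk1]
    calc 2*M = (2*M/ε) * ε := by field_simp
      _ ≤ ((k:ℝ)+1) * ε := by gcongr
      _ = ε * ((k:ℝ)+1) := by ring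
  have hkM2 : 2*M/((k:ℝ)+1+1) ≤ ε := by
    refine le_trans ?_ hkM
    have hMnn : (0:ℝ) ≤ 2*M := by linarith
    gcongr <;> linarith [Nat.cast_nonneg (α := ℝ) k]
  -- the two Birkhoff times
  have h1 := avg_est a ε φ hφ M hM k hk2
  have h2 := avg_est a ε φ hφ M hM (k+1) (by omega)
  rw [if_pos (by omega : (k+1) % 2 = 0)] at h1
  rw [if_neg (by omega : ¬ (k+1+1) % 2 = 0)] at h2
  set A1 := birk φ (Nat.factorial (k+1)) xi
  set A2 := birk φ (Nat.factorial (k+1+1)) xi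
  have hb1 : ‖A1 - (2:ℝ)⁻¹ • (a 0 + a 1)‖ ≤ 2*ε := by
    refine le_trans h1 ?_; linarith
  have hb2 : ‖A2 - (2:ℝ)⁻¹ • (a 0 + a 2)‖ ≤ 2*ε := by
    rw [Nat.cast_add, Nat.cast_one] at h2
    refine le_trans h2 ?_
    linarith [hkM2]
  have hd1 : ‖A1 - ρ‖ < ε := by
    rw [← dist_eq_norm]
    exact hn0 (Nat.factorial (k+1)) (le_trans (by omega) (Nat.self_le_factorial (k+1)))
  have hd2 : ‖A2 - ρ‖ < ε := by
    rw [← dist_eq_norm]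
    exact hn0 (Nat.factorial (k+1+1)) (le_trans (by omega) (Nat.self_le_factorial (k+2)))
  set m1 := (2:ℝ)⁻¹ • (a 0 + a 1)
  set m2 := (2:ℝ)⁻¹ • (a 0 + a 2)
  have hmm : m1 - m2 = (2:ℝ)⁻¹ • (a 1 - a 2) := by
    simp only [m1, m2, smul_add, smul_sub]; abel
  have hmmnorm : ‖m1 - m2‖ = 2⁻¹ * ‖a 1 - a 2‖ := by
    rw [hmm, norm_smul, Real.norm_eq_abs, abs_of_pos (by norm_num)]
  have htri : dist m1 m2 ≤ dist m1 A1 + dist A1 ρ + (dist ρ A2 + dist A2 m2) :=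
    le_trans (dist_triangle4 m1 A1 ρ m2) (by gcongr; exact dist_triangle ρ A2 m2)
  have e1 : dist m1 A1 = ‖A1 - m1‖ := by rw [dist_comm, dist_eq_norm]
  have e2 : dist A1 ρ = ‖A1 - ρ‖ := dist_eq_norm _ _
  have e3 : dist ρ A2 = ‖A2 - ρ‖ := by rw [dist_comm, dist_eq_norm]
  have e4 : dist A2 m2 = ‖A2 - m2‖ := dist_eq_norm _ _
  have e5 : dist m1 m2 = ‖m1 - m2‖ := dist_eq_norm _ _
  rw [e1, e2, e3, e4, e5, hmmnorm] at htri
  linarith
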